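/- Let β > 0 with β ≠ 1 and let r ∈ (0,1) satisfy 3(1−(1−r)^{1−β})/(1−β) < 2((1−r)^{−β} − 1)/β. Then there exists p ∈ (0,1) such that the sequence defined by a_0 = p and a_k = (1−p²)p^{k−1} for k ≥ 1 satisfies Σ_{k=0}^∞ r^k · (1/(k+1)) · Σ_{n=0}^k (Γ(k−n+β)/(Γ(k−n+1)Γ(β))) · a_n > (1/r) · (1−(1−r)^{1−β})/(1−β). -/

import Mathlib

set_option maxHeartbeats 1000000

open Real Finset

noncomputable def cb (δ : ℝ) (k : ℕ) : ℝ :=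
  Real.Gamma (k + δ) / (Real.Gamma (k + 1) * Real.Gamma δ)

lemma cb_zero (δ : ℝ) (hδ : Real.Gamma δ ≠ 0) : cb δ 0 = 1 := by
  simp [cb, Real.Gamma_one, hδ]

lemma kd_ne (δ : ℝ) (hδ1 : -1 < δ) (hδ0 : δ ≠ 0) (k : ℕ) : (k : ℝ) + δ ≠ 0 := by
  rcases Nat.eq_zero_or_pos k with h | h
  · simpa [h] using hδ0
  · have : (1 : ℝ) ≤ (k : ℝ) := by exact_mod_cast h
    nlinarith

lemma cb_succ (δ : ℝ) (hδ1 : -1 < δ) (hδ0 : δ ≠ 0) (k : ℕ) :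
    cb δ (k + 1) = (((k : ℝ) + δ) / ((k : ℝ) + 1)) * cb δ k := by
  have h1 : Real.Gamma ((k : ℝ) + δ + 1) = ((k : ℝ) + δ) * Real.Gamma ((k : ℝ) + δ) :=
    Real.Gamma_add_one (kd_ne δ hδ1 hδ0 k)
  have h2 : Real.Gamma ((k : ℝ) + 1 + 1) = ((k : ℝ) + 1) * Real.Gamma ((k : ℝ) + 1) :=
    Real.Gamma_add_one (by positivity)
  have h3 : Real.Gamma ((k : ℝ) + 1) ≠ 0 :=
    ne_of_gt (Real.Gamma_pos_of_pos (by positivity))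
  have hk1 : ((k : ℝ) + 1) ≠ 0 := by positivity
  simp only [cb, Nat.cast_add, Nat.cast_one]
  rw [show (k : ℝ) + 1 + δ = (k : ℝ) + δ + 1 by ring, h1, h2]
  field_simp

lemma cb_pos (δ : ℝ) (hδ : 0 < δ) (k : ℕ) : 0 < cb δ k := by
  have := Real.Gamma_pos_of_pos (show (0:ℝ) < (k : ℝ) + δ by positivity)
  have := Real.Gamma_pos_of_pos (show (0:ℝ) < (k : ℝ) + 1 by positivity)
  have := Real.Gamma_pos_of_pos hδ
  exact div_pos ‹0 < Real.Gamma ((k:ℝ) + δ)› (by positivity)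

lemma cb_pascal (β : ℝ) (hβ : 0 < β) (k : ℕ) :
    cb (β + 1) (k + 1) = cb (β + 1) k + cb β (k + 1) := by
  have hβ1 : (0:ℝ) < β + 1 := by linarith
  have e1 : cb (β + 1) (k + 1) = (((k : ℝ) + (β+1)) / ((k : ℝ) + 1)) * cb (β+1) k :=
    cb_succ (β+1) (by linarith) (by positivity) k
  have e2 : cb β (k + 1) = (((k : ℝ) + β) / ((k : ℝ) + 1)) * cb β k :=
    cb_succ β (by linarith) (ne_of_gt hβ) k
  -- relate cb (β+1) k and cb β k : cb (β+1) k = ((k+β)/β) * cb β k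
  have e3 : cb (β + 1) k = (((k : ℝ) + β) / β) * cb β k := by
    have h1 : Real.Gamma ((k : ℝ) + β + 1) = ((k : ℝ) + β) * Real.Gamma ((k : ℝ) + β) :=
      Real.Gamma_add_one (by positivity)
    have h2 : Real.Gamma (β + 1) = β * Real.Gamma β := Real.Gamma_add_one (ne_of_gt hβ)
    have h3 : Real.Gamma ((k : ℝ) + 1) ≠ 0 :=
      ne_of_gt (Real.Gamma_pos_of_pos (by positivity))
    have h4 : Real.Gamma β ≠ 0 := ne_of_gt (Real.Gamma_pos_of_pos hβ)
    simp only [cb]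
    rw [show (k : ℝ) + (β + 1) = (k : ℝ) + β + 1 by ring, h1, h2]
    field_simp
  rw [e1, e2, e3]
  have hk1 : ((k : ℝ) + 1) ≠ 0 := by positivity
  field_simp
  ring

lemma abs_cb_succ (δ : ℝ) (hδ1 : -1 < δ) (hδ0 : δ ≠ 0) (k : ℕ) :
    |cb δ (k + 1)| = (|(k : ℝ) + δ| / ((k : ℝ) + 1)) * |cb δ k| := by
  rw [cb_succ δ hδ1 hδ0 k, abs_mul, abs_div, abs_of_pos (show (0:ℝ) < (k:ℝ)+1 by positivity)]

lemma summable_w (δ : ℝ) (hδ1 : -1 < δ) (hδ0 : δ ≠ 0) (ρ : ℝ) (hρ : ρ ∈ Set.Ioo (0:ℝ) 1) :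
    Summable (fun k : ℕ => ((k : ℝ) + 1) * |cb δ k| * ρ ^ k) := by
  obtain ⟨hρ0, hρ1⟩ := hρ
  set l : ℝ := (1 + ρ) / 2 with hl
  have hl1 : l < 1 := by rw [hl]; linarith
  apply summable_of_ratio_norm_eventually_le hl1
  -- ratio tendsto ρ
  have t0 : Filter.Tendsto (fun k : ℕ => 1 / ((k : ℝ) + 1)) Filter.atTop (nhds 0) :=
    tendsto_one_div_add_atTop_nhds_zero_nat
  have t1 : Filter.Tendsto (fun k : ℕ => (((k : ℝ) + 2) / ((k : ℝ) + 1)) *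
      ((((k : ℝ) + δ)) / ((k : ℝ) + 1)) * ρ) Filter.atTop (nhds ρ) := by
    have h1 : Filter.Tendsto (fun k : ℕ => ((k : ℝ) + 2) / ((k : ℝ) + 1))
        Filter.atTop (nhds 1) := by
      have : (fun k : ℕ => ((k : ℝ) + 2) / ((k : ℝ) + 1)) =
          fun k : ℕ => 1 + 1 / ((k : ℝ) + 1) := by
        funext k
        have : ((k : ℝ) + 1) ≠ 0 := by positivity
        field_simp
        ring
      rw [this]
      simpa using Filter.Tendsto.const_add (1 : ℝ) t0
    have h2 : Filter.Tendsto (fun k : ℕ => ((k : ℝ) + δ) / ((k : ℝ) + 1))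
        Filter.atTop (nhds 1) := by
      have : (fun k : ℕ => ((k : ℝ) + δ) / ((k : ℝ) + 1)) =
          fun k : ℕ => 1 + (δ - 1) * (1 / ((k : ℝ) + 1)) := by
        funext k
        have : ((k : ℝ) + 1) ≠ 0 := by positivity
        field_simp
        ring
      rw [this]
      have h := Filter.Tendsto.const_add (1 : ℝ) (Filter.Tendsto.const_mul (δ - 1) t0)
      simpa using h
    have := (h1.mul h2).mul_const ρ
    simpa using this
  have hev : ∀ᶠ k : ℕ in Filter.atTop,
      (((k : ℝ) + 2) / ((k : ℝ) + 1)) * ((((k : ℝ) + δ)) / ((k : ℝ) + 1)) * ρ ≤ l ∧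
      (0 : ℝ) ≤ (k : ℝ) + δ := by
    have e1 : ∀ᶠ k : ℕ in Filter.atTop,
        (((k : ℝ) + 2) / ((k : ℝ) + 1)) * ((((k : ℝ) + δ)) / ((k : ℝ) + 1)) * ρ ≤ l := by
      have : ρ < l := by rw [hl]; linarith
      exact t1.eventually_le_const this
    have e2 : ∀ᶠ k : ℕ in Filter.atTop, (0 : ℝ) ≤ (k : ℝ) + δ := by
      filter_upwards [Filter.eventually_ge_atTop 1] with k hk
      have : (1 : ℝ) ≤ (k : ℝ) := by exact_mod_cast hk
      linarith
    exact e1.and e2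
  filter_upwards [hev] with k ⟨hk, hk0⟩
  have habs : |cb δ (k + 1)| = (((k : ℝ) + δ) / ((k : ℝ) + 1)) * |cb δ k| := by
    rw [abs_cb_succ δ hδ1 hδ0 k, abs_of_nonneg hk0]
  have hnorm : ‖((((k+1) : ℕ) : ℝ) + 1) * |cb δ (k+1)| * ρ ^ (k+1)‖ =
      ((((k : ℝ) + 2) / ((k : ℝ) + 1)) * ((((k : ℝ) + δ)) / ((k : ℝ) + 1)) * ρ) *
      (((k : ℝ) + 1) * |cb δ k| * ρ ^ k) := by
    rw [Real.norm_eq_abs, abs_of_nonneg (by positivity), habs]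
    push_cast
    have : ((k : ℝ) + 1) ≠ 0 := by positivity
    field_simp
    ring
  calc ‖((((k+1) : ℕ) : ℝ) + 1) * |cb δ (k+1)| * ρ ^ (k+1)‖
      = _ := hnorm
    _ ≤ l * (((k : ℝ) + 1) * |cb δ k| * ρ ^ k) := by
        have hy : (0:ℝ) ≤ ((k : ℝ) + 1) * |cb δ k| * ρ ^ k := by positivity
        exact mul_le_mul_of_nonneg_right hk hy
    _ = l * ‖((k : ℝ) + 1) * |cb δ k| * ρ ^ k‖ := by
        have hy : (0:ℝ) ≤ ((k : ℝ) + 1) * |cb δ k| * ρ ^ k := by positivity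
        rw [Real.norm_eq_abs, abs_of_nonneg hy]

lemma Gamma_ne_zero' (δ : ℝ) (hδ1 : -1 < δ) (hδ0 : δ ≠ 0) : Real.Gamma δ ≠ 0 := by
  apply Real.Gamma_ne_zero
  intro m
  rcases Nat.eq_zero_or_pos m with h | h
  · simpa [h] using hδ0
  · have : (1 : ℝ) ≤ (m : ℝ) := by exact_mod_cast h
    intro he
    rw [he] at hδ1
    linarith

lemma hasSum_binom (δ : ℝ) (hδ1 : -1 < δ) (hδ0 : δ ≠ 0) (x : ℝ)
    (hx : x ∈ Set.Ioo (0:ℝ) 1) :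
    HasSum (fun k : ℕ => cb δ k * x ^ k) ((1 - x) ^ (-δ)) := by
  obtain ⟨hx0, hx1⟩ := hx
  set ρ : ℝ := (x + 1) / 2 with hρdef
  have hxρ : x < ρ := by rw [hρdef]; linarith
  have hρ0 : (0:ℝ) < ρ := by rw [hρdef]; linarith
  have hρ1 : ρ < 1 := by rw [hρdef]; linarith
  have hw := summable_w δ hδ1 hδ0 ρ ⟨hρ0, hρ1⟩
  set t : Set ℝ := Set.Ioo (-ρ) ρ with htdef
  have ht : IsOpen t := isOpen_Ioo
  have h't : IsPreconnected t := isPreconnected_Ioo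
  set g : ℕ → ℝ → ℝ := fun k y => cb δ k * y ^ k with hgdef
  set g' : ℕ → ℝ → ℝ := fun k y => cb δ k * (k * y ^ (k - 1)) with hg'def
  set u : ℕ → ℝ := fun k => (((k:ℝ) + 1) * |cb δ k| * ρ ^ k) / ρ with hudef
  have hu : Summable u := hw.div_const ρ
  have hg : ∀ k y, y ∈ t → HasDerivAt (g k) (g' k y) y := by
    intro k y _
    simpa [hgdef, hg'def, mul_comm] using (hasDerivAt_pow k y).const_mul (cb δ k)
  have hg' : ∀ k y, y ∈ t → ‖g' k y‖ ≤ u k := by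
    intro k y hy
    have hyρ : |y| ≤ ρ := by
      rw [abs_le]
      exact ⟨le_of_lt hy.1, le_of_lt hy.2⟩
    rcases Nat.eq_zero_or_pos k with hk | hk
    · subst hk
      simp [hg'def, hudef]
      positivity
    · have hk1 : 1 ≤ k := hk
      have hbound : ‖g' k y‖ = |cb δ k| * ((k:ℝ) * |y| ^ (k-1)) := by
        simp [hg'def, Real.norm_eq_abs, abs_mul, abs_pow, abs_of_nonneg (show (0:ℝ) ≤ (k:ℝ) by positivity)]
      rw [hbound, hudef]
      have hpow : |y| ^ (k-1) ≤ ρ ^ (k-1) := pow_le_pow_left₀ (abs_nonneg _) hyρ _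
      have hρk : ρ ^ (k-1) = ρ ^ k / ρ := by
        have hkk : k - 1 + 1 = k := Nat.succ_pred_eq_of_pos hk
        rw [eq_div_iff (ne_of_gt hρ0), ← pow_succ, hkk]
      calc |cb δ k| * ((k:ℝ) * |y| ^ (k-1))
          ≤ |cb δ k| * ((k:ℝ) * ρ ^ (k-1)) := by
            apply mul_le_mul_of_nonneg_left _ (abs_nonneg _)
            exact mul_le_mul_of_nonneg_left hpow (by positivity)
        _ = (k:ℝ) * |cb δ k| * ρ ^ k / ρ := by rw [hρk]; field_simp
        _ ≤ ((k:ℝ) + 1) * |cb δ k| * ρ ^ k / ρ := by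
            apply div_le_div_of_nonneg_right _ hρ0.le
            have : (0:ℝ) ≤ |cb δ k| * ρ ^ k := by positivity
            nlinarith [this]
  have hg0 : Summable fun k => g k 0 := by
    apply summable_of_ne_finset_zero (s := {0})
    intro k hk
    have : k ≠ 0 := by simpa using hk
    simp [hgdef, zero_pow this]
  have h0t : (0:ℝ) ∈ t := ⟨by linarith, hρ0⟩
  -- summability of g and g' at points of t
  have gsum : ∀ y : ℝ, |y| ≤ ρ → Summable fun k => cb δ k * y ^ k := by
    intro y hy
    apply Summable.of_norm_bounded hw
    intro k
    rw [Real.norm_eq_abs, abs_mul, abs_pow]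
    have h1 : |y| ^ k ≤ ρ ^ k := pow_le_pow_left₀ (abs_nonneg _) hy _
    have h2 : |cb δ k| * |y| ^ k ≤ |cb δ k| * ρ ^ k :=
      mul_le_mul_of_nonneg_left h1 (abs_nonneg _)
    have h3 : |cb δ k| * ρ ^ k ≤ ((k:ℝ) + 1) * |cb δ k| * ρ ^ k := by
      have : (0:ℝ) ≤ |cb δ k| * ρ ^ k := by positivity
      nlinarith
    linarith
  have g'sum : ∀ y, y ∈ t → Summable fun k => g' k y := by
    intro y hy
    exact Summable.of_norm_bounded hu (fun k => hg' k y hy)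
  -- the sum function and its derivative
  set G : ℝ → ℝ := fun y => ∑' k, g k y with hGdef
  have hGder : ∀ y, y ∈ t → HasDerivAt G (∑' k, g' k y) y := by
    intro y hy
    exact hasDerivAt_tsum_of_isPreconnected hu ht h't hg hg' h0t hg0 hy
  -- the ODE
  have hODE : ∀ y, y ∈ t → (1 - y) * (∑' k, g' k y) = δ * G y := by
    intro y hy
    have hyρ : |y| ≤ ρ := by rw [abs_le]; exact ⟨le_of_lt hy.1, le_of_lt hy.2⟩
    set D : ℝ := ∑' k, g' k y with hDdef
    have hD : HasSum (fun k => g' k y) D := (g'sum y hy).hasSum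
    have h1 : HasSum (fun k => g' (k + 1) y) D := by
      refine (hasSum_nat_add_iff (f := fun k => g' k y) 1).mpr ?_
      simpa [hg'def] using hD
    have h2 : HasSum (fun k : ℕ => ((k:ℝ) + δ) * cb δ k * y ^ k) D := by
      have he : (fun k : ℕ => g' (k + 1) y) = fun k : ℕ => ((k:ℝ) + δ) * cb δ k * y ^ k := by
        funext k
        have hk1 : ((k:ℝ) + 1) ≠ 0 := by positivity
        simp only [hg'def]
        rw [cb_succ δ hδ1 hδ0 k]
        push_cast
        field_simp
      exact he ▸ h1
    have h3 : HasSum (fun k : ℕ => (k:ℝ) * cb δ k * y ^ k) (y * D) := by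
      refine (hD.mul_left y).congr_fun ?_
      intro k
      cases k with
      | zero => simp [hg'def]
      | succ m =>
        simp only [hg'def, Nat.add_sub_cancel]
        push_cast
        ring
    have h4 : HasSum (fun k : ℕ => δ * (cb δ k * y ^ k)) (D - y * D) := by
      refine (h2.sub h3).congr_fun ?_
      intro k; ring
    have h5 : HasSum (fun k : ℕ => δ * (cb δ k * y ^ k)) (δ * G y) :=
      (gsum y hyρ).hasSum.mul_left δ
    have := h4.unique h5
    linarith [this]
  -- the function h y = G y * (1 - y) ^ δ has zero derivative on [0, x]
  set h : ℝ → ℝ := fun y => G y * (1 - y) ^ δ with hhdef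
  have hsub : Set.Icc (0:ℝ) x ⊆ t := by
    intro y hy
    exact ⟨by linarith [hy.1], by linarith [hy.2]⟩
  have hder : ∀ y ∈ Set.Icc (0:ℝ) x, HasDerivAt h 0 y := by
    intro y hy
    have hyt : y ∈ t := hsub hy
    have hy1 : (0:ℝ) < 1 - y := by linarith [hy.2]
    have hG := hGder y hyt
    have hpow : HasDerivAt (fun z : ℝ => (1 - z) ^ δ) (δ * (1 - y) ^ (δ - 1) * (-1)) y := by
      have hbase : HasDerivAt (fun z : ℝ => 1 - z) (-1) y := by
        simpa using (hasDerivAt_id y).const_sub 1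
      have hr : HasDerivAt (fun w : ℝ => w ^ δ) (δ * (1 - y) ^ (δ - 1)) (1 - y) :=
        Real.hasDerivAt_rpow_const (Or.inl (ne_of_gt hy1))
      exact hr.comp y hbase
    have hmul := hG.mul hpow
    have hODEy := hODE y hyt
    have hzero : (∑' k, g' k y) * (1 - y) ^ δ +
        G y * (δ * (1 - y) ^ (δ - 1) * (-1)) = 0 := by
      have hsplit : (1 - y) ^ δ = (1 - y) ^ (δ - 1) * (1 - y) := by
        have hh := Real.rpow_add hy1 (δ - 1) 1
        rw [Real.rpow_one] at hh
        rw [show δ - 1 + 1 = δ from by ring] at hh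
        exact hh
      rw [hsplit]
      have : (∑' k, g' k y) * ((1 - y) ^ (δ - 1) * (1 - y)) =
          ((1 - y) * (∑' k, g' k y)) * (1 - y) ^ (δ - 1) := by ring
      rw [this, hODEy]
      ring
    exact hzero ▸ hmul
  have hcont : ContinuousOn h (Set.Icc 0 x) := fun y hy =>
    (hder y hy).continuousAt.continuousWithinAt
  have hconst : h x = h 0 := by
    refine constant_of_has_deriv_right_zero hcont ?_ x ?_
    · intro y hy
      exact (hder y (Set.mem_Icc.mpr ⟨hy.1, le_of_lt hy.2⟩)).hasDerivWithinAt
    · exact Set.mem_Icc.mpr ⟨le_of_lt hx0, le_refl x⟩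
  have hG0 : G 0 = 1 := by
    have h00 : (∑' k : ℕ, g k 0) = g 0 0 :=
      tsum_eq_single 0 (fun k hk => by simp [hgdef, zero_pow hk])
    have : G 0 = g 0 0 := h00
    rw [this]
    simp [hgdef, cb_zero δ (Gamma_ne_zero' δ hδ1 hδ0)]
  have hGx : G x = (1 - x) ^ (-δ) := by
    have hx1' : (0:ℝ) < 1 - x := by linarith
    have hne : (1 - x) ^ δ ≠ 0 := ne_of_gt (Real.rpow_pos_of_pos hx1' δ)
    have : G x * (1 - x) ^ δ = 1 := by
      have := hconst
      simp only [hhdef] at this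
      rw [this, hG0]
      simp
    rw [Real.rpow_neg (le_of_lt hx1')]
    field_simp at this ⊢
    linarith [this]
  have hxρ' : |x| ≤ ρ := by rw [abs_le]; constructor <;> linarith
  exact hGx ▸ (gsum x hxρ').hasSum

lemma hasSum_main (γ : ℝ) (hγ : 0 < γ) (hγ1 : γ ≠ 1) (r : ℝ) (hr : r ∈ Set.Ioo (0:ℝ) 1) :
    HasSum (fun k : ℕ => cb γ k * r ^ (k+1) / ((k:ℝ) + 1))
      ((1 - (1 - r) ^ (1 - γ)) / (1 - γ)) := by
  set δ : ℝ := γ - 1 with hδdef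
  have hδ1 : -1 < δ := by rw [hδdef]; linarith
  have hδ0 : δ ≠ 0 := by rw [hδdef]; intro hc; apply hγ1; linarith
  have hΓδ : Real.Gamma δ ≠ 0 := Gamma_ne_zero' δ hδ1 hδ0
  have hb := hasSum_binom δ hδ1 hδ0 r hr
  have hexp : -δ = 1 - γ := by rw [hδdef]; ring
  rw [hexp] at hb
  set S : ℝ := (1 - r) ^ (1 - γ) with hSdef
  have hs : HasSum (fun j : ℕ => cb δ j * r ^ j / (γ - 1)) (S / (γ - 1)) :=
    hb.div_const (γ - 1)
  have h1 : HasSum (fun k : ℕ => cb δ (k + 1) * r ^ (k + 1) / (γ - 1))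
      (S / (γ - 1) - 1 / (γ - 1)) := by
    refine (hasSum_nat_add_iff (f := fun j : ℕ => cb δ j * r ^ j / (γ - 1)) 1).mpr ?_
    have hval : S / (γ - 1) - 1 / (γ - 1) +
        ∑ i ∈ Finset.range 1, cb δ i * r ^ i / (γ - 1) = S / (γ - 1) := by
      simp [cb_zero δ hΓδ]
    rw [hval]
    exact hs
  have hterm : ∀ k : ℕ, cb γ k * r ^ (k + 1) / ((k:ℝ) + 1) =
      cb δ (k + 1) * r ^ (k + 1) / (γ - 1) := by
    intro k
    have hid : cb δ (k + 1) / (γ - 1) = cb γ k / ((k:ℝ) + 1) := by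
      have hG1 : Real.Gamma ((k:ℝ) + 1 + 1) = ((k:ℝ) + 1) * Real.Gamma ((k:ℝ) + 1) :=
        Real.Gamma_add_one (by positivity)
      have hG2 : Real.Gamma γ = (γ - 1) * Real.Gamma (γ - 1) := by
        have := Real.Gamma_add_one (show γ - 1 ≠ 0 from hδ0)
        rw [show γ - 1 + 1 = γ from by ring] at this
        exact this
      have h3 : Real.Gamma ((k:ℝ) + 1) ≠ 0 :=
        ne_of_gt (Real.Gamma_pos_of_pos (by positivity))
      have h4 : ((k:ℝ) + 1) ≠ 0 := by positivity
      have h5 : (γ - 1) ≠ 0 := hδ0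
      simp only [cb, hδdef]
      rw [show ((k:ℕ) + 1 : ℕ) = k + 1 from rfl]
      push_cast
      rw [show (k:ℝ) + 1 + (γ - 1) = (k:ℝ) + γ from by ring, hG1, hG2]
      field_simp
      try simp
      try tauto
    calc cb γ k * r ^ (k + 1) / ((k:ℝ) + 1) = (cb γ k / ((k:ℝ) + 1)) * r ^ (k + 1) := by
          ring
      _ = (cb δ (k + 1) / (γ - 1)) * r ^ (k + 1) := by rw [hid]
      _ = cb δ (k + 1) * r ^ (k + 1) / (γ - 1) := by ring
  have h2 : HasSum (fun k : ℕ => cb γ k * r ^ (k + 1) / ((k:ℝ) + 1))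
      (S / (γ - 1) - 1 / (γ - 1)) := h1.congr_fun hterm
  have hval2 : S / (γ - 1) - 1 / (γ - 1) = (1 - S) / (1 - γ) := by
    have h5 : (γ - 1) ≠ 0 := hδ0
    have h6 : (1 - γ) ≠ 0 := by intro hc; apply h5; linarith
    field_simp
    ring
  rw [hval2] at h2
  exact h2

lemma Sp_one (β : ℝ) (hβ : 0 < β) (k : ℕ) :
    ∑ n ∈ Finset.range k, cb β (k - 1 - n) = cb (β + 1) k - cb β k := by
  induction k with
  | zero =>
    simp [cb_zero β (ne_of_gt (Real.Gamma_pos_of_pos hβ)),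
      cb_zero (β+1) (ne_of_gt (Real.Gamma_pos_of_pos (by linarith)))]
  | succ k ih =>
    have hstep : ∑ n ∈ Finset.range (k + 1), cb β (k + 1 - 1 - n) =
        (∑ i ∈ Finset.range k, cb β (k - 1 - i)) + cb β k := by
      rw [Finset.sum_range_succ' (fun n => cb β (k + 1 - 1 - n)) k]
      congr 1
      apply Finset.sum_congr rfl
      intro i _
      congr 1
      omega
    rw [hstep, ih, cb_pascal β hβ k]
    ring

/-- Sharpness of the Bohr-type inequality for the β-Cesàro operator
(sharpness part of Theorem 2.1). -/
theorem cesaro_bohr_beta_sharp (β : ℝ) (hβ : 0 < β) (hβ1 : β ≠ 1)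
    (r : ℝ) (hr : r ∈ Set.Ioo (0 : ℝ) 1)
    (hR : 3 * (1 - (1 - r) ^ (1 - β)) / (1 - β) < 2 * ((1 - r) ^ (-β) - 1) / β) :
    ∃ p ∈ Set.Ioo (0 : ℝ) 1,
      (1 / r) * ((1 - (1 - r) ^ (1 - β)) / (1 - β)) <
        ∑' k : ℕ, r ^ k * ((1 / (k + 1 : ℝ)) *
          ∑ n ∈ Finset.range (k + 1),
            Real.Gamma (((k - n : ℕ) : ℝ) + β) /
              (Real.Gamma (((k - n : ℕ) : ℝ) + 1) * Real.Gamma β) *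
            (if n = 0 then p else (1 - p ^ 2) * p ^ (n - 1))) := by
  obtain ⟨hr0, hr1⟩ := hr
  have hr1' : (0:ℝ) < 1 - r := by linarith
  set A : ℝ := (1 - (1 - r) ^ (1 - β)) / (1 - β) with hAdef
  set B : ℝ := ((1 - r) ^ (-β) - 1) / β with hBdef
  -- hasSum facts
  have hLsum' := hasSum_main β hβ hβ1 r ⟨hr0, hr1⟩
  have hBsum' := hasSum_main (β + 1) (by linarith) (by intro hc; linarith) r ⟨hr0, hr1⟩
  have hβne : (-β) ≠ 0 := by
    intro hc
    have : β = 0 := by linarith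
    exact (ne_of_gt hβ) this
  have hBval : (1 - (1 - r) ^ (1 - (β + 1))) / (1 - (β + 1)) = B := by
    rw [hBdef, show (1 : ℝ) - (β + 1) = -β from by ring]
    rw [div_eq_div_iff hβne (ne_of_gt hβ)]
    ring
  rw [hBval] at hBsum'
  have hrne : r ≠ 0 := ne_of_gt hr0
  have hL : HasSum (fun k : ℕ => cb β k * r ^ k / ((k:ℝ) + 1)) (A / r) := by
    refine (hLsum'.div_const r).congr_fun ?_
    intro k
    rw [pow_succ]
    field_simp
  have hB : HasSum (fun k : ℕ => cb (β + 1) k * r ^ k / ((k:ℝ) + 1)) (B / r) := by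
    refine (hBsum'.div_const r).congr_fun ?_
    intro k
    rw [pow_succ]
    field_simp
  set L : ℝ := A / r with hLdef
  set M : ℝ := (B - A) / r with hMdef
  have hM : HasSum (fun k : ℕ => r ^ k / ((k:ℝ) + 1) * (cb (β + 1) k - cb β k)) M := by
    have hval : B / r - L = M := by rw [hMdef, hLdef]; ring
    exact hval ▸ ((hB.sub hL).congr_fun (fun k => by ring))
  -- positivity of A and the key inequality
  have hA : 0 < A := by
    rw [hAdef]
    rcases lt_or_gt_of_ne hβ1 with h | h
    · have h1 : (1 - r) ^ (1 - β) < 1 :=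
        Real.rpow_lt_one (le_of_lt hr1') (by linarith) (by linarith)
      apply div_pos (by linarith) (by linarith)
    · have h1 : 1 < (1 - r) ^ (1 - β) :=
        Real.one_lt_rpow_of_pos_of_lt_one_of_neg hr1' (by linarith) (by linarith)
      have h2 : 1 - (1 - r) ^ (1 - β) < 0 := by linarith
      have h3 : 1 - β < 0 := by linarith
      exact div_pos_of_neg_of_neg h2 h3
  have hL0 : 0 < L := div_pos hA hr0
  have h3A2B : 3 * A < 2 * B := by
    rw [hAdef, hBdef]
    calc 3 * ((1 - (1 - r) ^ (1 - β)) / (1 - β)) = 3 * (1 - (1 - r) ^ (1 - β)) / (1 - β) := by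
          ring
      _ < 2 * ((1 - r) ^ (-β) - 1) / β := hR
      _ = 2 * (((1 - r) ^ (-β) - 1) / β) := by ring
  have hL2M : L < 2 * M := by
    have h2 : A < 2 * (B - A) := by linarith
    have h3 : A / r < 2 * (B - A) / r := (div_lt_div_iff_of_pos_right hr0).mpr h2
    rw [hLdef, hMdef]
    calc A / r < 2 * (B - A) / r := h3
      _ = 2 * ((B - A) / r) := by ring
  -- the partial-sum functions
  set Sp : ℝ → ℕ → ℝ := fun p k => ∑ n ∈ Finset.range k, cb β (k - 1 - n) * p ^ n with hSpdef
  set g : ℝ → ℕ → ℝ := fun p k => r ^ k / ((k:ℝ) + 1) * Sp p k with hgdef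
  have hg1 : HasSum (g 1) M := by
    refine hM.congr_fun ?_
    intro k
    simp only [hgdef, hSpdef, one_pow, mul_one]
    rw [Sp_one β hβ k]
  have hSp_nonneg : ∀ p : ℝ, 0 ≤ p → ∀ k, 0 ≤ Sp p k := by
    intro p hp k
    apply Finset.sum_nonneg
    intro n _
    exact mul_nonneg (le_of_lt (cb_pos β hβ _)) (pow_nonneg hp n)
  have hSp_le : ∀ p : ℝ, 0 ≤ p → p ≤ 1 → ∀ k, Sp p k ≤ Sp 1 k := by
    intro p hp hp1 k
    apply Finset.sum_le_sum
    intro n _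
    have : p ^ n ≤ 1 := pow_le_one₀ hp hp1
    have hc := le_of_lt (cb_pos β hβ (k - 1 - n))
    simp only [one_pow]
    nlinarith
  have hg_nonneg : ∀ p : ℝ, 0 ≤ p → ∀ k, 0 ≤ g p k := by
    intro p hp k
    exact mul_nonneg (by positivity) (hSp_nonneg p hp k)
  have hg_le : ∀ p : ℝ, 0 ≤ p → p ≤ 1 → ∀ k, g p k ≤ g 1 k := by
    intro p hp hp1 k
    exact mul_le_mul_of_nonneg_left (hSp_le p hp hp1 k) (by positivity)
  have hgsum : ∀ p : ℝ, 0 ≤ p → p ≤ 1 → Summable (g p) := by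
    intro p hp hp1
    exact Summable.of_nonneg_of_le (hg_nonneg p hp) (hg_le p hp hp1) hg1.summable
  -- choose N with partial sum close to M
  set ε : ℝ := (2 * M - L) / 4 with hεdef
  have hε : 0 < ε := by rw [hεdef]; linarith
  have htend := hg1.tendsto_sum_nat
  have hev : ∀ᶠ N : ℕ in Filter.atTop, M - ε < ∑ k ∈ Finset.range N, g 1 k :=
    htend.eventually (eventually_gt_nhds (by linarith))
  obtain ⟨N, hN⟩ := hev.exists
  -- continuity of the truncated function
  set φ : ℝ → ℝ := fun p => (1 + p) * ∑ k ∈ Finset.range N, g p k with hφdef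
  have hφcont : Continuous φ := by
    apply Continuous.mul (continuous_const.add continuous_id)
    apply continuous_finset_sum
    intro k _
    apply Continuous.mul continuous_const
    apply continuous_finset_sum
    intro n _
    exact continuous_const.mul (continuous_pow n)
  have hφ1 : L < φ 1 := by
    have : φ 1 = 2 * ∑ k ∈ Finset.range N, g 1 k := by rw [hφdef]; norm_num
    rw [this]
    have : 2 * (M - ε) < 2 * ∑ k ∈ Finset.range N, g 1 k := by linarith
    calc L = 2 * M - 4 * ε := by rw [hεdef]; ring
      _ < 2 * (M - ε) := by linarith
      _ < _ := this
  -- find p in (0,1) with L < φ p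
  have hne : Filter.NeBot (nhdsWithin (1:ℝ) (Set.Ioo (0:ℝ) 1)) :=
    right_nhdsWithin_Ioo_neBot (by norm_num)
  have htendφ : Filter.Tendsto φ (nhdsWithin (1:ℝ) (Set.Ioo (0:ℝ) 1)) (nhds (φ 1)) :=
    (hφcont.continuousAt.tendsto).mono_left nhdsWithin_le_nhds
  have hev2 : ∀ᶠ p in nhdsWithin (1:ℝ) (Set.Ioo (0:ℝ) 1), L < φ p :=
    htendφ.eventually (eventually_gt_nhds hφ1)
  have hev3 : ∀ᶠ p in nhdsWithin (1:ℝ) (Set.Ioo (0:ℝ) 1), p ∈ Set.Ioo (0:ℝ) 1 :=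
    eventually_mem_nhdsWithin
  obtain ⟨p, hφp, hp⟩ := (hev2.and hev3).exists
  obtain ⟨hp0, hp1⟩ := hp
  refine ⟨p, ⟨hp0, hp1⟩, ?_⟩
  -- the total sum
  have hsg := hgsum p (le_of_lt hp0) (le_of_lt hp1)
  set U : ℝ := ∑' k, g p k with hUdef
  have hU : HasSum (g p) U := hsg.hasSum
  have hφU : φ p ≤ (1 + p) * U := by
    rw [hφdef]
    apply mul_le_mul_of_nonneg_left _ (by linarith)
    exact Summable.sum_le_tsum (Finset.range N) (fun k _ => hg_nonneg p (le_of_lt hp0) k) hsg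
  have hkey : L < (1 + p) * U := lt_of_lt_of_le hφp hφU
  -- identify the theorem's sum
  have hT : HasSum (fun k : ℕ => r ^ k * ((1 / ((k:ℝ) + 1)) *
      ∑ n ∈ Finset.range (k + 1),
        Real.Gamma (((k - n : ℕ) : ℝ) + β) /
          (Real.Gamma (((k - n : ℕ) : ℝ) + 1) * Real.Gamma β) *
        (if n = 0 then p else (1 - p ^ 2) * p ^ (n - 1))))
      (p * (A / r) + (1 - p ^ 2) * U) := by
    refine ((hL.mul_left p).add (hU.mul_left (1 - p ^ 2))).congr_fun ?_
    intro k
    have hinner : ∑ n ∈ Finset.range (k + 1),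
        Real.Gamma (((k - n : ℕ) : ℝ) + β) /
          (Real.Gamma (((k - n : ℕ) : ℝ) + 1) * Real.Gamma β) *
        (if n = 0 then p else (1 - p ^ 2) * p ^ (n - 1)) =
        cb β k * p + (1 - p ^ 2) * Sp p k := by
      rw [Finset.sum_range_succ' (fun n => Real.Gamma (((k - n : ℕ) : ℝ) + β) /
          (Real.Gamma (((k - n : ℕ) : ℝ) + 1) * Real.Gamma β) *
          (if n = 0 then p else (1 - p ^ 2) * p ^ (n - 1)))]
      simp only [Nat.sub_zero, if_pos rfl]
      rw [add_comm]
      congr 1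
      rw [hSpdef, Finset.mul_sum]
      apply Finset.sum_congr rfl
      intro i _
      have hif : (if i + 1 = 0 then p else (1 - p ^ 2) * p ^ (i + 1 - 1)) =
          (1 - p ^ 2) * p ^ i := by simp
      rw [hif]
      have hind : k - (i + 1) = k - 1 - i := by omega
      rw [hind]
      show cb β (k - 1 - i) * ((1 - p ^ 2) * p ^ i) = (1 - p ^ 2) * (cb β (k - 1 - i) * p ^ i)
      ring
    rw [hinner, hgdef]
    show r ^ k * (1 / ((k:ℝ) + 1) * (cb β k * p + (1 - p ^ 2) * Sp p k)) =
      p * (cb β k * r ^ k / ((k:ℝ) + 1)) + (1 - p ^ 2) * (r ^ k / ((k:ℝ) + 1) * Sp p k)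
    ring
  rw [hT.tsum_eq]
  have hgoal : (1 / r) * A = L := by rw [hLdef]; ring
  rw [hgoal]
  have hprod : 0 < (1 - p) * ((1 + p) * U - L) :=
    mul_pos (by linarith) (by linarith)
  nlinarith [hprod]
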